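/- Let G = (V, E) be a connected d-regular graph with (discrete) spectral gap c_G > 0, meaning that for every mean-zero function f ∈ ℓ²(V), Σ_{v∈V}|f(v)|² ≤ c_G^{-2} Σ_{v∈V} |Σ_{v'∼v}(f(v') - f(v))|². Let M = ⋃_{v∈V} B_v be a Riemannian manifold written as a union of pieces B_v, one per vertex, all isometric to a fixed compact manifold B (with pieces glued along edges of G), each satisfying a Poincaré inequality: for every v and every C¹ function g, ∫_{B_v}|g - avg_{B_v} g|² ≤ p_B ∫_{B_v}|∇g|², and similarly on unions B_v ∪ B_{v'} of adjacent pieces with the same constant p_B. Then every mean-zero C¹ function g on M satisfies ∫_M |g|² ≤ C(d, p_B, c_G, vol(B)) ∫_M |∇g|², i.e., M has a spectral gap for functions controlled by the graph spectral gap and the local Poincaré constants. -/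

import Mathlib

open MeasureTheory

lemma integrable_shift_sq {α : Type*} [MeasurableSpace α] {μ : Measure α} [IsFiniteMeasure μ]
    {g : α → ℝ} (c : ℝ) (h1 : Integrable g μ) (h2 : Integrable (fun x => g x ^ 2) μ) :
    Integrable (fun x => (g x - c) ^ 2) μ := by
  have e0 : (fun x => (g x - c) ^ 2) = fun x => (g x ^ 2 - (2 * c) * g x) + c ^ 2 :=
    funext fun x => by ring
  rw [e0]
  exact (h2.sub (h1.const_mul (2 * c))).add (integrable_const _)

/-- Expansion of the integral of a shifted square. -/
lemma integral_shift_sq {α : Type*} [MeasurableSpace α] (μ : Measure α) [IsFiniteMeasure μ]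
    {g : α → ℝ} (c : ℝ) (h1 : Integrable g μ) (h2 : Integrable (fun x => g x ^ 2) μ) :
    ∫ x, (g x - c) ^ 2 ∂μ
      = ∫ x, g x ^ 2 ∂μ - 2 * c * ∫ x, g x ∂μ + c ^ 2 * (μ Set.univ).toReal := by
  have e0 : (fun x => (g x - c) ^ 2) = fun x => (g x ^ 2 - (2 * c) * g x) + c ^ 2 :=
    funext fun x => by ring
  have i1 : Integrable (fun x => g x ^ 2 - (2 * c) * g x) μ := h2.sub (h1.const_mul (2 * c))
  rw [e0, integral_add i1 (integrable_const _), integral_sub h2 (h1.const_mul (2 * c)),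
    integral_const_mul, integral_const, smul_eq_mul, measureReal_def]
  ring

/-- Cauchy–Schwarz: the square of the integral is at most the total mass times the
integral of the square. -/
lemma sq_integral_le_measure_mul {α : Type*} [MeasurableSpace α] (μ : Measure α)
    [IsFiniteMeasure μ] {h : α → ℝ} (h1 : Integrable h μ)
    (h2 : Integrable (fun x => h x ^ 2) μ) :
    (∫ x, h x ∂μ) ^ 2 ≤ (μ Set.univ).toReal * ∫ x, h x ^ 2 ∂μ := by
  set T := (μ Set.univ).toReal with hT
  set I := ∫ x, h x ∂μ with hI
  have hTnn : 0 ≤ T := ENNReal.toReal_nonneg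
  rcases eq_or_lt_of_le hTnn with hT0 | hTpos
  · have hμ0 : μ = 0 := by
      have h0 : μ Set.univ = 0 := by
        rcases (ENNReal.toReal_eq_zero_iff _).mp hT0.symm with h | h
        · exact h
        · exact absurd h (measure_ne_top μ _)
      exact Measure.measure_univ_eq_zero.mp h0
    have hI0 : I = 0 := by rw [hI, hμ0, integral_zero_measure]
    rw [hI0, ← hT0]
    simp
  · have key : 0 ≤ ∫ x, (h x - I / T) ^ 2 ∂μ := integral_nonneg fun x => sq_nonneg _
    rw [integral_shift_sq μ (I / T) h1 h2, ← hI, ← hT] at key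
    have hT0 : T ≠ 0 := hTpos.ne'
    have key2 : 0 ≤ ∫ x, h x ^ 2 ∂μ - I ^ 2 / T := by
      have : 2 * (I / T) * I - (I / T) ^ 2 * T = I ^ 2 / T := by field_simp; ring
      linarith [key, this]
    have : I ^ 2 / T ≤ ∫ x, h x ^ 2 ∂μ := by linarith
    calc I ^ 2 = T * (I ^ 2 / T) := by field_simp
      _ ≤ T * ∫ x, h x ^ 2 ∂μ := mul_le_mul_of_nonneg_left this hTnn

theorem expander_gluing_function_gap
    (d : ℕ) (pB cG volB : ℝ) (hd : 0 < d) (hpB : 0 < pB) (hcG : 0 < cG) (hvolB : 0 < volB) :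
    ∃ Cst : ℝ, 0 < Cst ∧
      ∀ (V : Type) [Fintype V] (G : SimpleGraph V) [DecidableRel G.Adj],
        G.Connected →
        G.IsRegularOfDegree d →
        -- `G` has discrete spectral gap `c_G`
        (∀ f : V → ℝ, ∑ v, f v = 0 →
          ∑ v, (f v) ^ 2 ≤ cG⁻¹ ^ 2 * ∑ v, (∑ w ∈ G.neighborFinset v, (f w - f v)) ^ 2) →
        ∀ (M : Type) [MeasurableSpace M] (μ : Measure M) (B : V → Set M),
          (∀ v, MeasurableSet (B v)) →
          (⋃ v, B v) = Set.univ →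
          (∀ v w, v ≠ w → μ (B v ∩ B w) = 0) →
          (∀ v, μ (B v) = ENNReal.ofReal volB) →
          ∀ g grad : M → ℝ,
            Integrable g μ →
            Integrable (fun x => (g x) ^ 2) μ →
            Integrable (fun x => (grad x) ^ 2) μ →
            (∫ x, g x ∂μ) = 0 →
            -- Poincaré inequality on each piece
            (∀ v, ∫ x in B v, (g x - volB⁻¹ * ∫ y in B v, g y ∂μ) ^ 2 ∂μ
                ≤ pB * ∫ x in B v, (grad x) ^ 2 ∂μ) →
            -- Poincaré inequality on each union of adjacent pieces
            (∀ v w, G.Adj v w →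
              ∫ x in B v ∪ B w,
                  (g x - (μ (B v ∪ B w)).toReal⁻¹ * ∫ y in B v ∪ B w, g y ∂μ) ^ 2 ∂μ
                ≤ pB * ∫ x in B v ∪ B w, (grad x) ^ 2 ∂μ) →
            ∫ x, (g x) ^ 2 ∂μ ≤ Cst * ∫ x, (grad x) ^ 2 ∂μ := by
  refine ⟨pB + 8 * (d : ℝ) ^ 2 * cG⁻¹ ^ 2 * pB, by positivity, ?_⟩
  intro V _ G _ hconn hreg hgap M _ μ B hBmeas hBcover hBdisj hBvol g grad hg hg2 hgrad2
    hgmean hPv hPvw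
  -- piece averages and piece energies
  set f : V → ℝ := fun v => volB⁻¹ * ∫ x in B v, g x ∂μ with hf
  set E : V → ℝ := fun v => ∫ x in B v, (grad x) ^ 2 ∂μ with hE
  have hE0 : ∀ v, 0 ≤ E v := fun v => integral_nonneg fun x => sq_nonneg _
  have hBfin : ∀ v, μ (B v) ≠ ⊤ := fun v => by rw [hBvol v]; exact ENNReal.ofReal_ne_top
  have hBtoReal : ∀ v, (μ (B v)).toReal = volB := fun v => by
    rw [hBvol v, ENNReal.toReal_ofReal hvolB.le]
  have hfinv : ∀ v, IsFiniteMeasure (μ.restrict (B v)) := fun v =>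
    ⟨by rw [Measure.restrict_apply_univ]; exact (hBfin v).lt_top⟩
  -- the integral over M decomposes as the sum over the pieces
  have hsum : ∀ h : M → ℝ, Integrable h μ → ∫ x, h x ∂μ = ∑ v, ∫ x in B v, h x ∂μ := by
    intro h hh
    have h1 := integral_iUnion_ae (μ := μ) (s := B)
      (fun v => (hBmeas v).nullMeasurableSet)
      (fun v w hvw => hBdisj v w hvw) (f := h)
      (by rw [hBcover]; exact hh.integrableOn)
    rw [hBcover, Measure.restrict_univ] at h1
    rw [h1, tsum_fintype]
  -- the averages sum to zero
  have hfsum : ∑ v, f v = 0 := by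
    have h0 : ∑ v, ∫ x in B v, g x ∂μ = 0 := by rw [← hsum g hg, hgmean]
    simp only [hf]
    rw [← Finset.mul_sum, h0, mul_zero]
  -- ∫ g over B v equals volB * f v
  have hint_g : ∀ v, ∫ x in B v, g x ∂μ = volB * f v := fun v => by
    simp only [hf]; rw [← mul_assoc, mul_inv_cancel₀ hvolB.ne', one_mul]
  -- per-piece bound
  have hpiece : ∀ v, ∫ x in B v, g x ^ 2 ∂μ ≤ pB * E v + volB * f v ^ 2 := by
    intro v
    haveI := hfinv v
    have hP := hPv v
    have hexp : ∫ x in B v, (g x - volB⁻¹ * ∫ y in B v, g y ∂μ) ^ 2 ∂μ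
        = ∫ x in B v, g x ^ 2 ∂μ - volB * f v ^ 2 := by
      have hfv : volB⁻¹ * ∫ y in B v, g y ∂μ = f v := rfl
      rw [hfv, integral_shift_sq (μ.restrict (B v)) (f v) hg.restrict hg2.restrict,
        Measure.restrict_apply_univ, hBtoReal v, hint_g v]
      ring
    rw [hexp] at hP
    linarith [hP]
  -- per-edge bound
  have hedge : ∀ v w, G.Adj v w → (f w - f v) ^ 2 ≤ 4 * pB * volB⁻¹ * (E v + E w) := by
    intro v w hadj
    set U : Set M := B v ∪ B w with hU
    set A : ℝ := (μ U).toReal⁻¹ * ∫ y in U, g y ∂μ with hA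
    have hUlt : μ U < ⊤ :=
      measure_union_lt_top (hBfin v).lt_top (hBfin w).lt_top
    haveI hUfin : IsFiniteMeasure (μ.restrict U) :=
      ⟨by rw [Measure.restrict_apply_univ]; exact hUlt⟩
    -- energy on the union is at most the sum of the piece energies
    have hEU : ∫ x in U, (grad x) ^ 2 ∂μ ≤ E v + E w := by
      have h1 : ∫ x in U, (grad x) ^ 2 ∂μ
          ≤ ∫ x, (grad x) ^ 2 ∂(μ.restrict (B v) + μ.restrict (B w)) := by
        refine integral_mono_measure (Measure.restrict_union_le _ _) ?_ ?_
        · exact Filter.Eventually.of_forall fun x => sq_nonneg _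
        · exact (hgrad2.restrict).add_measure (hgrad2.restrict)
      rwa [integral_add_measure hgrad2.restrict hgrad2.restrict] at h1
    have hPU : ∫ x in U, (g x - A) ^ 2 ∂μ ≤ pB * (E v + E w) :=
      le_trans (hPvw v w hadj) (mul_le_mul_of_nonneg_left hEU hpB.le)
    -- integrability of (g - A)^2 on the union
    have hgA2U : IntegrableOn (fun x => (g x - A) ^ 2) U μ :=
      integrable_shift_sq A hg.restrict hg2.restrict
    -- for each of the two pieces
    have hkey : ∀ u : V, B u ⊆ U → (f u - A) ^ 2 ≤ volB⁻¹ * ∫ x in U, (g x - A) ^ 2 ∂μ := by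
      intro u hsub
      haveI := hfinv u
      have hCS := sq_integral_le_measure_mul (μ.restrict (B u))
        (h := fun x => g x - A)
        (hg.restrict.sub (integrable_const _))
        (integrable_shift_sq A hg.restrict hg2.restrict)
      have hmv : ∫ x in B u, (g x - A) ∂μ = volB * (f u - A) := by
        rw [integral_sub hg.restrict (integrable_const _), integral_const]
        simp only [smul_eq_mul, measureReal_def, Measure.restrict_apply_univ, hBtoReal u, hint_g u]
        ring
      rw [hmv, Measure.restrict_apply_univ, hBtoReal u] at hCS
      have hmono : ∫ x in B u, (g x - A) ^ 2 ∂μ ≤ ∫ x in U, (g x - A) ^ 2 ∂μ :=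
        setIntegral_mono_set hgA2U
          (Filter.Eventually.of_forall fun x => sq_nonneg _)
          (HasSubset.Subset.eventuallyLE hsub)
      have h2 : volB * (f u - A) ^ 2 ≤ ∫ x in B u, (g x - A) ^ 2 ∂μ := by
        nlinarith [hCS, hvolB]
      have h3 : volB * (f u - A) ^ 2 ≤ ∫ x in U, (g x - A) ^ 2 ∂μ := le_trans h2 hmono
      calc (f u - A) ^ 2 = volB⁻¹ * (volB * (f u - A) ^ 2) := by
            field_simp
        _ ≤ volB⁻¹ * ∫ x in U, (g x - A) ^ 2 ∂μ :=
            mul_le_mul_of_nonneg_left h3 (inv_nonneg.mpr hvolB.le)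
    have hv := hkey v Set.subset_union_left
    have hw := hkey w Set.subset_union_right
    have hIU : volB⁻¹ * ∫ x in U, (g x - A) ^ 2 ∂μ ≤ volB⁻¹ * (pB * (E v + E w)) :=
      mul_le_mul_of_nonneg_left hPU (inv_nonneg.mpr hvolB.le)
    nlinarith [hv, hw, hIU, sq_nonneg (f w - f v), sq_nonneg (f w + f v - 2 * A)]
  -- graph spectral gap step
  have hcard : ∀ v : V, (G.neighborFinset v).card = d := fun v => hreg v
  have hswap : ∑ v, ∑ w ∈ G.neighborFinset v, E w = (d : ℝ) * ∑ v, E v := by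
    have h1 : ∀ v : V, ∑ w ∈ G.neighborFinset v, E w
        = ∑ w, if G.Adj v w then E w else 0 := by
      intro v
      rw [SimpleGraph.neighborFinset_eq_filter, Finset.sum_filter]
    simp_rw [h1]
    rw [Finset.sum_comm]
    have h2 : ∀ w : V, ∑ v, (if G.Adj v w then E w else 0) = (d : ℝ) * E w := by
      intro w
      have h3 : ∀ v : V, (if G.Adj v w then E w else 0)
          = (if G.Adj w v then E w else 0) := fun v => if_congr (G.adj_comm v w) rfl rfl
      simp_rw [h3]
      rw [← Finset.sum_filter, ← SimpleGraph.neighborFinset_eq_filter, Finset.sum_const,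
        hcard w]
      simp [mul_comm]
    simp_rw [h2]
    rw [← Finset.mul_sum]
  have hgraph : ∑ v, f v ^ 2 ≤ cG⁻¹ ^ 2 * (8 * (d : ℝ) ^ 2 * pB * volB⁻¹ * ∑ v, E v) := by
    refine (hgap f hfsum).trans ?_
    refine mul_le_mul_of_nonneg_left ?_ (by positivity)
    have hinner : ∀ v : V, (∑ w ∈ G.neighborFinset v, (f w - f v)) ^ 2
        ≤ (d : ℝ) * ∑ w ∈ G.neighborFinset v, (4 * pB * volB⁻¹ * (E v + E w)) := by
      intro v
      refine le_trans sq_sum_le_card_mul_sum_sq ?_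
      rw [hcard v]
      refine mul_le_mul_of_nonneg_left ?_ (by positivity)
      refine Finset.sum_le_sum fun w hw => ?_
      have hsq : (f w - f v) ^ 2 ≤ 4 * pB * volB⁻¹ * (E v + E w) :=
        hedge v w ((SimpleGraph.mem_neighborFinset G v w).mp hw)
      exact hsq
    calc ∑ v, (∑ w ∈ G.neighborFinset v, (f w - f v)) ^ 2
        ≤ ∑ v, (d : ℝ) * ∑ w ∈ G.neighborFinset v, (4 * pB * volB⁻¹ * (E v + E w)) :=
          Finset.sum_le_sum fun v _ => hinner v
      _ = (d : ℝ) * (4 * pB * volB⁻¹) *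
            ∑ v, ∑ w ∈ G.neighborFinset v, (E v + E w) := by
          simp_rw [← Finset.mul_sum]
          ring
      _ = (d : ℝ) * (4 * pB * volB⁻¹) * (2 * (d : ℝ) * ∑ v, E v) := by
          congr 1
          have hsplit : ∑ v, ∑ w ∈ G.neighborFinset v, (E v + E w)
              = (∑ v, ∑ w ∈ G.neighborFinset v, E v)
                + ∑ v, ∑ w ∈ G.neighborFinset v, E w := by
            rw [← Finset.sum_add_distrib]
            refine Finset.sum_congr rfl fun v _ => ?_
            rw [Finset.sum_add_distrib]
          rw [hsplit, hswap]
          have hconstsum : ∀ v : V, ∑ w ∈ G.neighborFinset v, E v = (d : ℝ) * E v := by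
            intro v
            rw [Finset.sum_const, hcard v]
            simp [mul_comm]
          simp_rw [hconstsum]
          rw [← Finset.mul_sum]
          ring
      _ = 8 * (d : ℝ) ^ 2 * pB * volB⁻¹ * ∑ v, E v := by ring
  -- put everything together
  have hEtot : ∑ v, E v = ∫ x, (grad x) ^ 2 ∂μ := (hsum _ hgrad2).symm
  have hg2tot : ∫ x, g x ^ 2 ∂μ = ∑ v, ∫ x in B v, g x ^ 2 ∂μ := hsum _ hg2
  have hmain : ∫ x, g x ^ 2 ∂μ ≤ pB * ∑ v, E v + volB * ∑ v, f v ^ 2 := by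
    rw [hg2tot]
    calc ∑ v, ∫ x in B v, g x ^ 2 ∂μ
        ≤ ∑ v, (pB * E v + volB * f v ^ 2) := Finset.sum_le_sum fun v _ => hpiece v
      _ = pB * ∑ v, E v + volB * ∑ v, f v ^ 2 := by
          rw [Finset.sum_add_distrib, Finset.mul_sum, Finset.mul_sum]
  have hS : 0 ≤ ∑ v, E v := Finset.sum_nonneg fun v _ => hE0 v
  have hvol : volB * volB⁻¹ = 1 := mul_inv_cancel₀ hvolB.ne'
  have hfinal : volB * ∑ v, f v ^ 2 ≤ 8 * (d : ℝ) ^ 2 * cG⁻¹ ^ 2 * pB * ∑ v, E v := by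
    calc volB * ∑ v, f v ^ 2
        ≤ volB * (cG⁻¹ ^ 2 * (8 * (d : ℝ) ^ 2 * pB * volB⁻¹ * ∑ v, E v)) :=
          mul_le_mul_of_nonneg_left hgraph hvolB.le
      _ = (volB * volB⁻¹) * (8 * (d : ℝ) ^ 2 * cG⁻¹ ^ 2 * pB * ∑ v, E v) := by ring
      _ = 8 * (d : ℝ) ^ 2 * cG⁻¹ ^ 2 * pB * ∑ v, E v := by rw [hvol, one_mul]
  rw [← hEtot]
  calc ∫ x, g x ^ 2 ∂μ ≤ pB * ∑ v, E v + volB * ∑ v, f v ^ 2 := hmain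
    _ ≤ pB * ∑ v, E v + 8 * (d : ℝ) ^ 2 * cG⁻¹ ^ 2 * pB * ∑ v, E v := by linarith
    _ = (pB + 8 * (d : ℝ) ^ 2 * cG⁻¹ ^ 2 * pB) * ∑ v, E v := by ring
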